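/- In the algebra Z_n, for each 1 ≤ k ≤ n and m ≥ 0: z_k^m w_k^m = Q_k^m · (Q_{k-1}/Q_k; q^{-2})_m and w_k^m z_k^m = Q_k^m · (q² Q_{k-1}/Q_k; q²)_m, where these identities are understood as z_k^m w_k^m = ∏_{j=0}^{m-1} (Q_k − q^{-2j} Q_{k-1}) and w_k^m z_k^m = ∏_{j=0}^{m-1} (Q_k − q^{2j+2} Q_{k-1}). -/

import Mathlib

set_option maxRecDepth 100000

noncomputable section

/-- Free algebra on generators `z_1,…,z_n, w_1,…,w_n`. -/
abbrev FreeZW (n : ℕ) := FreeAlgebra ℂ (Fin n ⊕ Fin n)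

/-- Generator `z_i`. -/
def zGen (n : ℕ) (i : Fin n) : FreeZW n := FreeAlgebra.ι ℂ (Sum.inl i)

/-- Generator `w_i`. -/
def wGen (n : ℕ) (i : Fin n) : FreeZW n := FreeAlgebra.ι ℂ (Sum.inr i)

/-- The defining relations of the quantized algebra of polynomials on `ℂ^n`:
`z_i z_j = q z_j z_i` (i<j), `w_j w_i = q w_i w_j` (i<j), `w_i z_j = q z_j w_i` (i≠j),
`w_i z_i = z_i w_i + (1-q²) ∑_{k<i} z_k w_k`. -/
inductive ZRel (n : ℕ) (q : ℝ) : FreeZW n → FreeZW n → Prop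
  | zz {i j : Fin n} (h : i < j) :
      ZRel n q (zGen n i * zGen n j) ((q : ℂ) • (zGen n j * zGen n i))
  | ww {i j : Fin n} (h : i < j) :
      ZRel n q (wGen n j * wGen n i) ((q : ℂ) • (wGen n i * wGen n j))
  | wz {i j : Fin n} (h : i ≠ j) :
      ZRel n q (wGen n i * zGen n j) ((q : ℂ) • (zGen n j * wGen n i))
  | wzDiag (i : Fin n) :
      ZRel n q (wGen n i * zGen n i)
        (zGen n i * wGen n i +
          (1 - (q : ℂ) ^ 2) • ∑ k ∈ Finset.univ.filter (· < i), zGen n k * wGen n k)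

/-- The quantized algebra `Z_n` of polynomials on `ℂ^n`. -/
abbrev ZAlg (n : ℕ) (q : ℝ) := RingQuot (ZRel n q)

/-- The generator `z_i` of `Z_n`. -/
def zEl (n : ℕ) (q : ℝ) (i : Fin n) : ZAlg n q :=
  RingQuot.mkAlgHom ℂ (ZRel n q) (zGen n i)

/-- The generator `w_i` of `Z_n`. -/
def wEl (n : ℕ) (q : ℝ) (i : Fin n) : ZAlg n q :=
  RingQuot.mkAlgHom ℂ (ZRel n q) (wGen n i)

/-- The monomial `z^λ w^μ = z_1^{λ_1} ⋯ z_n^{λ_n} w_n^{μ_n} ⋯ w_1^{μ_1}` in `Z_n`. -/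
def zwMono (n : ℕ) (q : ℝ) (lam mu : Fin n → ℕ) : ZAlg n q :=
  (List.ofFn fun i : Fin n => zEl n q i ^ lam i).prod *
    (List.ofFn fun i : Fin n => wEl n q i.rev ^ mu i.rev).prod

/-- The central element `Q_i = ∑_{k=1}^{i} z_k w_k` (here `i : ℕ`, summing over the first
`i` indices; `Q_0 = 0`). -/
def QEl (n : ℕ) (q : ℝ) (i : ℕ) : ZAlg n q :=
  ∑ k ∈ Finset.univ.filter (fun k : Fin n => (k : ℕ) < i), zEl n q k * wEl n q k

section Aux

variable (n : ℕ) (q : ℝ)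

lemma rel_zz {i j : Fin n} (h : i < j) :
    zEl n q i * zEl n q j = (q : ℂ) • (zEl n q j * zEl n q i) := by
  have := RingQuot.mkAlgHom_rel ℂ (ZRel.zz (n := n) (q := q) h)
  simpa only [zEl, map_mul, map_smul] using this

lemma rel_ww {i j : Fin n} (h : i < j) :
    wEl n q j * wEl n q i = (q : ℂ) • (wEl n q i * wEl n q j) := by
  have := RingQuot.mkAlgHom_rel ℂ (ZRel.ww (n := n) (q := q) h)
  simpa only [wEl, map_mul, map_smul] using this

lemma rel_wz {i j : Fin n} (h : i ≠ j) :
    wEl n q i * zEl n q j = (q : ℂ) • (zEl n q j * wEl n q i) := by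
  have := RingQuot.mkAlgHom_rel ℂ (ZRel.wz (n := n) (q := q) h)
  simpa only [zEl, wEl, map_mul, map_smul] using this

lemma rel_wzDiag (i : Fin n) :
    wEl n q i * zEl n q i =
      zEl n q i * wEl n q i + (1 - (q : ℂ) ^ 2) • QEl n q (i : ℕ) := by
  have := RingQuot.mkAlgHom_rel ℂ (ZRel.wzDiag (n := n) (q := q) i)
  simp only [map_mul, map_add, map_smul, map_sum] at this
  have hfilt : (Finset.univ.filter (· < i)) =
      Finset.univ.filter (fun j : Fin n => (j : ℕ) < (i : ℕ)) := by
    ext j; simp only [Finset.mem_filter, Finset.mem_univ, true_and, Fin.lt_def]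
  rw [QEl, ← hfilt]
  exact this

lemma QEl_succ (k : Fin n) :
    QEl n q ((k : ℕ) + 1) = zEl n q k * wEl n q k + QEl n q (k : ℕ) := by
  unfold QEl
  have : (Finset.univ.filter fun j : Fin n => (j : ℕ) < (k : ℕ) + 1) =
      insert k (Finset.univ.filter fun j : Fin n => (j : ℕ) < (k : ℕ)) := by
    ext j
    simp only [Finset.mem_filter, Finset.mem_univ, true_and, Finset.mem_insert,
      Fin.ext_iff, Nat.lt_succ_iff_lt_or_eq]
    tauto
  rw [this, Finset.sum_insert (by simp only [Finset.mem_filter, Finset.mem_univ, true_and]; omega)]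

lemma QEl_mul_z (k : Fin n) :
    QEl n q (k : ℕ) * zEl n q k = ((q : ℂ) ^ 2) • (zEl n q k * QEl n q (k : ℕ)) := by
  unfold QEl
  rw [Finset.sum_mul, Finset.mul_sum, Finset.smul_sum]
  refine Finset.sum_congr rfl fun j hj => ?_
  have hjk : j < k := Fin.lt_def.mpr (Finset.mem_filter.mp hj).2
  calc zEl n q j * wEl n q j * zEl n q k
      = zEl n q j * (wEl n q j * zEl n q k) := by rw [mul_assoc]
    _ = zEl n q j * ((q : ℂ) • (zEl n q k * wEl n q j)) := by
        rw [rel_wz n q (ne_of_lt hjk)]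
    _ = (q : ℂ) • (zEl n q j * zEl n q k * wEl n q j) := by
        rw [mul_smul_comm, mul_assoc]
    _ = (q : ℂ) • (((q : ℂ) • (zEl n q k * zEl n q j)) * wEl n q j) := by
        rw [rel_zz n q hjk]
    _ = ((q : ℂ) ^ 2) • (zEl n q k * (zEl n q j * wEl n q j)) := by
        rw [smul_mul_assoc, smul_smul, ← pow_two, mul_assoc]

lemma w_mul_QEl (k : Fin n) :
    wEl n q k * QEl n q (k : ℕ) = ((q : ℂ) ^ 2) • (QEl n q (k : ℕ) * wEl n q k) := by
  unfold QEl
  rw [Finset.sum_mul, Finset.mul_sum, Finset.smul_sum]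
  refine Finset.sum_congr rfl fun j hj => ?_
  have hjk : j < k := Fin.lt_def.mpr (Finset.mem_filter.mp hj).2
  calc wEl n q k * (zEl n q j * wEl n q j)
      = (wEl n q k * zEl n q j) * wEl n q j := by rw [mul_assoc]
    _ = ((q : ℂ) • (zEl n q j * wEl n q k)) * wEl n q j := by
        rw [rel_wz n q (ne_of_gt hjk)]
    _ = (q : ℂ) • (zEl n q j * (wEl n q k * wEl n q j)) := by
        rw [smul_mul_assoc, mul_assoc]
    _ = (q : ℂ) • (zEl n q j * ((q : ℂ) • (wEl n q j * wEl n q k))) := by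
        rw [rel_ww n q hjk]
    _ = ((q : ℂ) ^ 2) • (zEl n q j * wEl n q j * wEl n q k) := by
        rw [mul_smul_comm, smul_smul, ← pow_two, mul_assoc]

/-- Abstract key lemma: from the three commutation relations between `z`, `w`, `A`
and `P = z*w + A` we get the two `q`-Pochhammer product formulas. -/
lemma key {R : Type*} [Ring R] [Algebra ℂ R] (z w A P : R) (c : ℂ) (hc : c ≠ 0)
    (hP : P = z * w + A)
    (hAz : A * z = c • (z * A))
    (hwA : w * A = c • (A * w))
    (hwz : w * z = z * w + (1 - c) • A) (m : ℕ) :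
    z ^ m * w ^ m = ((List.range m).map fun j => P - (c⁻¹) ^ j • A).prod ∧
    w ^ m * z ^ m = ((List.range m).map fun j => P - (c ^ (j + 1)) • A).prod := by
  have hAw : A * w = c⁻¹ • (w * A) := by
    rw [hwA, smul_smul, inv_mul_cancel₀ hc, one_smul]
  have hPz : P * z = z * P := by
    calc P * z = z * (w * z) + A * z := by rw [hP]; noncomm_ring
      _ = z * (z * w + (1 - c) • A) + c • (z * A) := by rw [hwz, hAz]
      _ = z * (z * w) + ((1 - c) • (z * A) + c • (z * A)) := by
          rw [mul_add, mul_smul_comm, add_assoc]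
      _ = z * (z * w) + z * A := by
          rw [← add_smul, sub_add_cancel, one_smul]
      _ = z * P := by rw [hP, mul_add]
  have hwP : w * P = P * w := by
    calc w * P = (w * z) * w + w * A := by rw [hP]; noncomm_ring
      _ = (z * w + (1 - c) • A) * w + c • (A * w) := by rw [hwz, hwA]
      _ = z * w * w + ((1 - c) • (A * w) + c • (A * w)) := by
          rw [add_mul, smul_mul_assoc, add_assoc]
      _ = z * w * w + A * w := by
          rw [← add_smul, sub_add_cancel, one_smul]
      _ = P * w := by rw [hP, add_mul]
  have hPzm : ∀ t : ℕ, P * z ^ t = z ^ t * P := by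
    intro t; induction t with
    | zero => simp
    | succ t ih => rw [pow_succ, ← mul_assoc, ih, mul_assoc, hPz, ← mul_assoc]
  have hPwm : ∀ t : ℕ, P * w ^ t = w ^ t * P := by
    intro t; induction t with
    | zero => simp
    | succ t ih => rw [pow_succ, ← mul_assoc, ih, mul_assoc, ← hwP, ← mul_assoc]
  have hAzm : ∀ t : ℕ, A * z ^ t = c ^ t • (z ^ t * A) := by
    intro t; induction t with
    | zero => simp
    | succ t ih =>
        rw [pow_succ, ← mul_assoc, ih, smul_mul_assoc, mul_assoc, hAz,
          mul_smul_comm, smul_smul, ← mul_assoc, ← pow_succ]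
  have hAwm : ∀ t : ℕ, A * w ^ t = (c⁻¹) ^ t • (w ^ t * A) := by
    intro t; induction t with
    | zero => simp
    | succ t ih =>
        rw [pow_succ, ← mul_assoc, ih, smul_mul_assoc, mul_assoc, hAw,
          mul_smul_comm, smul_smul, ← mul_assoc, ← pow_succ]
  have hzw : z * w = P - A := by rw [hP, add_sub_cancel_right]
  have hwz' : w * z = P - c • A := by
    rw [hwz, hP, sub_smul, one_smul]; abel
  induction m with
  | zero => simp
  | succ m ih =>
      obtain ⟨ih1, ih2⟩ := ih
      constructor
      · have h1 : z ^ (m + 1) * w ^ (m + 1) = z ^ m * ((P - A) * w ^ m) := by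
          rw [pow_succ, pow_succ', ← hzw]; noncomm_ring
        have h2 : (P - A) * w ^ m = w ^ m * (P - (c⁻¹) ^ m • A) := by
          rw [sub_mul, mul_sub, hPwm, hAwm, mul_smul_comm]
        rw [h1, h2, ← mul_assoc, ih1, List.range_succ, List.map_append,
          List.prod_append]
        simp
      · have h1 : w ^ (m + 1) * z ^ (m + 1) = w ^ m * ((P - c • A) * z ^ m) := by
          rw [pow_succ, pow_succ', ← hwz']; noncomm_ring
        have h2 : (P - c • A) * z ^ m = z ^ m * (P - c ^ (m + 1) • A) := by
          rw [sub_mul, mul_sub, hPzm, smul_mul_assoc, hAzm, mul_smul_comm,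
            smul_smul, ← pow_succ']
        rw [h1, h2, ← mul_assoc, ih2, List.range_succ, List.map_append,
          List.prod_append]
        simp

end Aux

/-- In `Z_n` (0-based indexing: the paper's `z_k, Q_{k-1}, Q_k` are `zEl n q k`,
`QEl n q (k : ℕ)`, `QEl n q ((k : ℕ)+1)`): for every `k` and `m ≥ 0`,
`z_k^m w_k^m = ∏_{j=0}^{m-1} (Q_k − q^{-2j} Q_{k-1})` and
`w_k^m z_k^m = ∏_{j=0}^{m-1} (Q_k − q^{2j+2} Q_{k-1})`
(the factors commute; we take the ordered product). -/
theorem zw_pow_eq_qPoch (n : ℕ) (q : ℝ) (h0 : 0 < q) (h1 : q < 1) (k : Fin n) (m : ℕ) :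
    zEl n q k ^ m * wEl n q k ^ m =
      ((List.range m).map fun j =>
        QEl n q ((k : ℕ) + 1) - ((((q : ℂ) ^ 2)⁻¹) ^ j) • QEl n q (k : ℕ)).prod ∧
    wEl n q k ^ m * zEl n q k ^ m =
      ((List.range m).map fun j =>
        QEl n q ((k : ℕ) + 1) - ((q : ℂ) ^ (2 * j + 2)) • QEl n q (k : ℕ)).prod := by
  have hq : (q : ℂ) ≠ 0 := Complex.ofReal_ne_zero.mpr (ne_of_gt h0)
  have hc : ((q : ℂ) ^ 2) ≠ 0 := pow_ne_zero _ hq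
  have H := key (zEl n q k) (wEl n q k) (QEl n q (k : ℕ)) (QEl n q ((k : ℕ) + 1))
    ((q : ℂ) ^ 2) hc (QEl_succ n q k) (QEl_mul_z n q k) (w_mul_QEl n q k)
    (rel_wzDiag n q k) m
  refine ⟨H.1, ?_⟩
  have hfun : (fun j => QEl n q ((k : ℕ) + 1) - ((q : ℂ) ^ (2 * j + 2)) • QEl n q (k : ℕ))
      = fun j => QEl n q ((k : ℕ) + 1) - (((q : ℂ) ^ 2) ^ (j + 1)) • QEl n q (k : ℕ) := by
    funext j
    rw [← pow_mul, show 2 * (j + 1) = 2 * j + 2 by ring]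
  rw [hfun]
  exact H.2

end
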